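/- Let A be an invertible symmetric n×n real matrix and let S be an m-dimensional linear subspace of ℝⁿ. If S₁ is a subspace of S of dimension l such that ‖P_S(Ax)‖ ≤ (2‖A⁻¹‖)⁻¹‖x‖ for every x ∈ S₁ (where P_S is the orthogonal projection onto S), then S₁ ∩ A⁻¹(S) = {0}, and consequently l ≤ n − m. -/

import Mathlib

open scoped InnerProductSpace

/-- Lemma on sections: if `A` is an invertible symmetric operator on `ℝⁿ`, `S` an
`m`-dimensional subspace and `S₁ ⊆ S` an `l`-dimensional subspace on which the
projection of `Ax` to `S` is small, then `S₁ ∩ A⁻¹S = {0}` and `l ≤ n - m`. -/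
theorem stmt_0 (n m l : ℕ)
    (A : EuclideanSpace ℝ (Fin n) ≃L[ℝ] EuclideanSpace ℝ (Fin n))
    (hsym : ∀ x y : EuclideanSpace ℝ (Fin n), ⟪A x, y⟫_ℝ = ⟪x, A y⟫_ℝ)
    (S S₁ : Submodule ℝ (EuclideanSpace ℝ (Fin n)))
    (hSm : Module.finrank ℝ S = m)
    (hS₁S : S₁ ≤ S) (hS₁l : Module.finrank ℝ S₁ = l)
    (hproj : ∀ x ∈ S₁, ‖(S.orthogonalProjectionOnto (A x) : EuclideanSpace ℝ (Fin n))‖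
      ≤ (2 * ‖(A.symm : EuclideanSpace ℝ (Fin n) →L[ℝ] EuclideanSpace ℝ (Fin n))‖)⁻¹ * ‖x‖) :
    S₁ ⊓ S.map (A.symm : EuclideanSpace ℝ (Fin n) →ₗ[ℝ] EuclideanSpace ℝ (Fin n)) = ⊥
      ∧ l ≤ n - m := by
  set B := (A.symm : EuclideanSpace ℝ (Fin n) →L[ℝ] EuclideanSpace ℝ (Fin n)) with hB
  have hbot : S₁ ⊓ S.map (A.symm : EuclideanSpace ℝ (Fin n) →ₗ[ℝ] EuclideanSpace ℝ (Fin n)) = ⊥ := by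
    rw [Submodule.eq_bot_iff]
    rintro x ⟨hx1, hx2⟩
    obtain ⟨y, hyS, hyx⟩ := Submodule.mem_map.mp hx2
    have hAx : A x ∈ S := by
      have : A x = y := by
        have : A.symm y = x := hyx
        rw [← this]; simp
      rwa [this]
    have hproj' : ‖(S.orthogonalProjectionOnto (A x) : EuclideanSpace ℝ (Fin n))‖
        ≤ (2 * ‖B‖)⁻¹ * ‖x‖ := hproj x hx1
    rw [show (S.orthogonalProjectionOnto (A x) : EuclideanSpace ℝ (Fin n)) = A x from
      Submodule.starProjection_eq_self_iff.mpr hAx] at hproj'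
    have hx : ‖x‖ = ‖B (A x)‖ := by simp [hB]
    have h1 : ‖x‖ ≤ ‖B‖ * ‖A x‖ := by rw [hx]; exact B.le_opNorm _
    have h2 : ‖B‖ * ‖A x‖ ≤ ‖B‖ * ((2 * ‖B‖)⁻¹ * ‖x‖) :=
      mul_le_mul_of_nonneg_left hproj' (norm_nonneg _)
    have hle : ‖B‖ * ((2 * ‖B‖)⁻¹ * ‖x‖) ≤ (1/2) * ‖x‖ := by
      rcases eq_or_lt_of_le (norm_nonneg B) with h | h
      · rw [← h, zero_mul]; positivity
      · have hne : ‖B‖ ≠ 0 := ne_of_gt h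
        rw [mul_inv]
        have heq : ‖B‖ * (2⁻¹ * ‖B‖⁻¹ * ‖x‖) = (1/2) * ‖x‖ := by
          rw [show ‖B‖ * (2⁻¹ * ‖B‖⁻¹ * ‖x‖) = (‖B‖ * ‖B‖⁻¹) * (2⁻¹ * ‖x‖) by ring,
            mul_inv_cancel₀ hne, one_mul]
          norm_num
        exact heq.le
    have : ‖x‖ ≤ (1/2) * ‖x‖ := le_trans h1 (le_trans h2 hle)
    have : ‖x‖ ≤ 0 := by linarith
    simpa using le_antisymm this (norm_nonneg x)
  refine ⟨hbot, ?_⟩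
  have hmapdim : Module.finrank ℝ
      (S.map (A.symm : EuclideanSpace ℝ (Fin n) →ₗ[ℝ] EuclideanSpace ℝ (Fin n))) = m := by
    exact (LinearEquiv.finrank_map_eq A.symm.toLinearEquiv S).trans hSm
  have hkey := Submodule.finrank_sup_add_finrank_inf_eq S₁
    (S.map (A.symm : EuclideanSpace ℝ (Fin n) →ₗ[ℝ] EuclideanSpace ℝ (Fin n)))
  rw [hbot, hS₁l, hmapdim] at hkey
  simp at hkey
  have hle := Submodule.finrank_le (S₁ ⊔
    S.map (A.symm : EuclideanSpace ℝ (Fin n) →ₗ[ℝ] EuclideanSpace ℝ (Fin n)))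
  replace hle : l + m ≤ _ := (Eq.le hkey.symm).trans hle
  simp [finrank_euclideanSpace] at hle
  omega
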